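/- (Correctness of the findRegion search) Let r ≥ 1, let a ≤ b in ℤ^r (componentwise), and let f be a predicate on ℤ^r that is upward closed within the box [a,b]: if a ≤ d ≤ d' ≤ b, f(d) holds, then f(d') holds. Then the breadth-first search that starts from the set K = {a}, repeatedly removes a degree d from K, skips it if it lies above an already-found degree in A, adds d to A if f(d) holds, and otherwise adds each d + e_i ≤ b to K, terminates, and its output A is exactly the set of minimal elements (with respect to the componentwise order) of { d ∈ ℤ^r : a ≤ d ≤ b and f(d) }. -/

import Mathlib

noncomputable section

open Classical in
/-- One step of the `findRegion` breadth-first search.  The state is a pair `(A, K)` of lists of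
multidegrees: `A` holds the degrees already found to satisfy `f`, and `K` is the queue of degrees
remaining to be checked (a FIFO queue, so degrees are visited in order of increasing total
degree).  A step removes the first element `d` of `K`; if `d` lies above an element of `A` it is
skipped; otherwise, if `f d` holds then `d` is added to `A`, and if not then every `d + eᵢ` that
is still `≤ b` is appended to the end of the queue. -/
def frStep {r : ℕ} (f : (Fin r → ℤ) → Prop) (b : Fin r → ℤ) :
    List (Fin r → ℤ) × List (Fin r → ℤ) → List (Fin r → ℤ) × List (Fin r → ℤ)
  | (A, []) => (A, [])
  | (A, d :: K) =>
    if ∃ α ∈ A, α ≤ d then (A, K)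
    else if f d then (d :: A, K)
    else (A, K ++ (List.finRange r).filterMap (fun i =>
      if d + Pi.single i 1 ≤ b then some (d + Pi.single i 1) else none))

namespace FRAux

variable {r : ℕ}

def tot (d : Fin r → ℤ) : ℤ := ∑ i, d i

lemma tot_mono {x y : Fin r → ℤ} (h : x ≤ y) : tot x ≤ tot y :=
  Finset.sum_le_sum fun i _ => h i

lemma tot_strict {x y : Fin r → ℤ} (h : x ≤ y) (hne : x ≠ y) : tot x < tot y := by
  obtain ⟨i, hi⟩ : ∃ i, x i ≠ y i := by
    by_contra hc; push_neg at hc; exact hne (funext hc)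
  exact Finset.sum_lt_sum (fun i _ => h i) ⟨i, Finset.mem_univ i, lt_of_le_of_ne (h i) hi⟩

lemma tot_succ (d : Fin r → ℤ) (i : Fin r) : tot (d + Pi.single i 1) = tot d + 1 := by
  unfold tot
  simp [Finset.sum_add_distrib, Pi.single_apply]

lemma exists_succ_le {d m : Fin r → ℤ} (h : d ≤ m) (hne : d ≠ m) :
    ∃ i, d + Pi.single i 1 ≤ m := by
  obtain ⟨i, hi⟩ : ∃ i, d i ≠ m i := by
    by_contra hc; push_neg at hc; exact hne (funext hc)
  refine ⟨i, fun j => ?_⟩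
  rcases eq_or_ne j i with rfl | hj
  · have : d j < m j := lt_of_le_of_ne (h j) hi
    simp only [Pi.add_apply, Pi.single_apply, if_pos rfl]
    omega
  · simp only [Pi.add_apply, Pi.single_apply, if_neg hj]
    simpa using h j

lemma exists_minimal_le (S : (Fin r → ℤ) → Prop) (a : Fin r → ℤ)
    (hS : ∀ x, S x → a ≤ x) :
    ∀ n : ℕ, ∀ x, S x → (tot x - tot a).toNat ≤ n → ∃ m, Minimal S m ∧ m ≤ x := by
  intro n
  induction n with
  | zero =>
    intro x hx hn
    have hax : tot a ≤ tot x := tot_mono (hS x hx)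
    refine ⟨x, ⟨hx, fun y hy hyx => ?_⟩, le_refl x⟩
    by_contra hxy
    have hne : y ≠ x := fun h => hxy (h ▸ le_refl x)
    have h1 : tot y < tot x := tot_strict hyx hne
    have h2 : tot a ≤ tot y := tot_mono (hS y hy)
    omega
  | succ n ih =>
    intro x hx hn
    by_cases hmin : ∀ y, S y → y ≤ x → x ≤ y
    · exact ⟨x, ⟨hx, fun y hy hyx => hmin y hy hyx⟩, le_refl x⟩
    · push_neg at hmin
      obtain ⟨y, hy, hyx, hxy⟩ := hmin
      have hne : y ≠ x := fun h => hxy (h ▸ le_refl x)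
      have h1 : tot y < tot x := tot_strict hyx hne
      have h2 : tot a ≤ tot y := tot_mono (hS y hy)
      obtain ⟨m, hm, hmy⟩ := ih y hy (by omega)
      exact ⟨m, hm, hmy.trans hyx⟩

variable (a b : Fin r → ℤ) (f : (Fin r → ℤ) → Prop)

def SP (x : Fin r → ℤ) : Prop := a ≤ x ∧ x ≤ b ∧ f x

def Inv (st : List (Fin r → ℤ) × List (Fin r → ℤ)) : Prop :=
  (∀ α ∈ st.1, Minimal (SP a b f) α) ∧
  (∀ d ∈ st.2, a ≤ d ∧ d ≤ b) ∧
  (∃ t : ℤ, ∃ P Q : List (Fin r → ℤ), st.2 = P ++ Q ∧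
     (∀ d ∈ P, tot d = t) ∧ (∀ d ∈ Q, tot d = t + 1)) ∧
  (∀ m, Minimal (SP a b f) m → m ∈ st.1 ∨ ∃ d ∈ st.2, d ≤ m)

lemma inv_step (st : List (Fin r → ℤ) × List (Fin r → ℤ)) (h : Inv a b f st) :
    Inv a b f (frStep f b st) := by
  classical
  obtain ⟨A, K⟩ := st
  match K with
  | [] => simpa [frStep] using h
  | d :: K =>
    obtain ⟨hA, hK, ⟨t, P, Q, hPQ, hP, hQ⟩, hcov⟩ := h
    have hdb : a ≤ d ∧ d ≤ b := hK d (List.mem_cons_self)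
    have hmemtot : ∀ d' ∈ d :: K, tot d' = t ∨ tot d' = t + 1 := by
      intro d' hd'
      have h2 : d' ∈ P ++ Q := hPQ ▸ hd'
      rcases List.mem_append.1 h2 with hm | hm
      · exact Or.inl (hP d' hm)
      · exact Or.inr (hQ d' hm)
    -- head has minimal total degree, and K splits at level tot d
    have hstruct : (∀ d' ∈ d :: K, tot d ≤ tot d') ∧
        ∃ P₂ Q₂ : List (Fin r → ℤ), K = P₂ ++ Q₂ ∧
          (∀ x ∈ P₂, tot x = tot d) ∧ (∀ x ∈ Q₂, tot x = tot d + 1) := by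
      rcases P with _ | ⟨p, P'⟩
      · simp only [List.nil_append] at hPQ
        have hdt : tot d = t + 1 := hQ d (hPQ ▸ List.mem_cons_self)
        constructor
        · intro d' hd'
          have := hQ d' (hPQ ▸ hd')
          omega
        · refine ⟨K, [], by simp, fun x hx => ?_, by simp⟩
          have := hQ x (hPQ ▸ List.mem_cons_of_mem _ hx)
          omega
      · rw [List.cons_append] at hPQ
        injection hPQ with h1 h2
        subst h1 h2
        have hdt : tot d = t := hP d (List.mem_cons_self)
        constructor
        · intro d' hd'
          rcases hmemtot d' hd' with h | h <;> omega
        · refine ⟨P', Q, rfl, fun x hx => ?_, fun x hx => ?_⟩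
          · have := hP x (List.mem_cons_of_mem _ hx); omega
          · have := hQ x hx; omega
    obtain ⟨hheadmin, P₂, Q₂, hK2, hP₂, hQ₂⟩ := hstruct
    have hKsub : ∀ x ∈ K, a ≤ x ∧ x ≤ b := fun x hx => hK x (List.mem_cons_of_mem _ hx)
    show Inv a b f (frStep f b (A, d :: K))
    simp only [frStep]
    split_ifs with h1 h2
    · -- skip: some α ∈ A is ≤ d
      obtain ⟨α, hαA, hαd⟩ := h1
      refine ⟨hA, hKsub, ⟨tot d, P₂, Q₂, hK2, hP₂, hQ₂⟩, ?_⟩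
      intro m hm
      rcases hcov m hm with hmA | ⟨d', hd', hd'm⟩
      · exact Or.inl hmA
      · rcases List.mem_cons.1 hd' with rfl | hd'K
        · -- d' = d: then α ≤ d ≤ m, minimality of m forces m = α ∈ A
          have hαm : α ≤ m := hαd.trans hd'm
          have := hm.2 (hA α hαA).1 hαm
          have : m = α := le_antisymm this hαm
          exact Or.inl (this ▸ hαA)
        · exact Or.inr ⟨d', hd'K, hd'm⟩
    · -- found: f d holds, d is added to A
      have hdS : SP a b f d := ⟨hdb.1, hdb.2, h2⟩
      have hdmin : Minimal (SP a b f) d := by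
        refine ⟨hdS, fun y hy hyd => ?_⟩
        by_contra hdy
        have hne : y ≠ d := fun h => hdy (h ▸ le_refl d)
        obtain ⟨m, hm, hmy⟩ := exists_minimal_le (SP a b f) a (fun x hx => hx.1)
          (tot y - tot a).toNat y hy (le_refl _)
        have hmd : tot m < tot d := lt_of_le_of_lt (tot_mono hmy) (tot_strict hyd hne)
        rcases hcov m hm with hmA | ⟨d', hd', hd'm⟩
        · exact h1 ⟨m, hmA, hmy.trans hyd⟩
        · have := hheadmin d' hd'
          have := tot_mono hd'm
          omega
      refine ⟨?_, hKsub, ⟨tot d, P₂, Q₂, hK2, hP₂, hQ₂⟩, ?_⟩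
      · intro α hα
        rcases List.mem_cons.1 hα with rfl | hαA
        · exact hdmin
        · exact hA α hαA
      · intro m hm
        rcases hcov m hm with hmA | ⟨d', hd', hd'm⟩
        · exact Or.inl (List.mem_cons_of_mem _ hmA)
        · rcases List.mem_cons.1 hd' with rfl | hd'K
          · have := hm.2 hdS hd'm
            have : m = d' := le_antisymm this hd'm
            exact Or.inl (this ▸ List.mem_cons_self)
          · exact Or.inr ⟨d', hd'K, hd'm⟩
    · -- not found: successors are enqueued
      set succs := (List.finRange r).filterMap (fun i =>
        if d + Pi.single i 1 ≤ b then some (d + Pi.single i 1) else none) with hsuccs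
      have hsm : ∀ x ∈ succs, (∃ i, x = d + Pi.single i 1) ∧ x ≤ b := by
        intro x hx
        rw [hsuccs, List.mem_filterMap] at hx
        obtain ⟨i, _, hi⟩ := hx
        split_ifs at hi with hc
        · cases hi; exact ⟨⟨i, rfl⟩, hc⟩
      refine ⟨hA, ?_, ?_, ?_⟩
      · intro x hx
        rcases List.mem_append.1 hx with hx | hx
        · exact hKsub x hx
        · obtain ⟨⟨i, rfl⟩, hxb⟩ := hsm x hx
          refine ⟨le_trans hdb.1 ?_, hxb⟩
          intro j
          simp only [Pi.add_apply, Pi.single_apply]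
          split_ifs <;> omega
      · refine ⟨tot d, P₂, Q₂ ++ succs, by rw [hK2, List.append_assoc], hP₂, ?_⟩
        intro x hx
        rcases List.mem_append.1 hx with hx | hx
        · exact hQ₂ x hx
        · obtain ⟨⟨i, rfl⟩, _⟩ := hsm x hx
          exact tot_succ d i
      · intro m hm
        rcases hcov m hm with hmA | ⟨d', hd', hd'm⟩
        · exact Or.inl hmA
        · rcases List.mem_cons.1 hd' with rfl | hd'K
          · -- d' = d, ¬ f d but f m, so d ≠ m and some d + eᵢ ≤ m
            have hne : d' ≠ m := by
              rintro rfl; exact h2 hm.1.2.2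
            obtain ⟨i, hi⟩ := exists_succ_le hd'm hne
            refine Or.inr ⟨d' + Pi.single i 1, List.mem_append_right _ ?_, hi⟩
            rw [hsuccs, List.mem_filterMap]
            exact ⟨i, List.mem_finRange i, by rw [if_pos (hi.trans hm.1.2.1)]⟩
          · exact Or.inr ⟨d', List.mem_append_left _ hd'K, hd'm⟩

def wt (d : Fin r → ℤ) : ℕ := (r + 1) ^ ((tot b - tot d).toNat)

def mea (st : List (Fin r → ℤ) × List (Fin r → ℤ)) : ℕ := (st.2.map (wt b)).sum

lemma wt_pos (d : Fin r → ℤ) : 0 < wt b d := Nat.pow_pos (Nat.succ_pos r)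

lemma mea_step (st : List (Fin r → ℤ) × List (Fin r → ℤ)) (h : Inv a b f st)
    (hne : st.2 ≠ []) : mea b (frStep f b st) < mea b st := by
  classical
  obtain ⟨A, K⟩ := st
  match K with
  | [] => exact absurd rfl hne
  | d :: K =>
    obtain ⟨hA, hK, -, -⟩ := h
    have hdb : a ≤ d ∧ d ≤ b := hK d (List.mem_cons_self)
    have htb : tot d ≤ tot b := tot_mono hdb.2
    show mea b (frStep f b (A, d :: K)) < mea b (A, d :: K)
    simp only [frStep]
    split_ifs with h1 h2
    · simp only [mea, List.map_cons, List.sum_cons]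
      have := wt_pos (r := r) b d
      omega
    · simp only [mea, List.map_cons, List.sum_cons]
      have := wt_pos (r := r) b d
      omega
    · set succs := (List.finRange r).filterMap (fun i =>
        if d + Pi.single i 1 ≤ b then some (d + Pi.single i 1) else none) with hsuccs
      have hgoal : (succs.map (wt b)).sum < wt b d := by
        rcases List.eq_nil_or_concat succs with hnil | ⟨_, x, hx⟩
        · rw [hnil]; simpa using wt_pos (r := r) b d
        · -- succs is nonempty, so some d + eᵢ ≤ b, hence tot d < tot b
          have hxmem : x ∈ succs := by simp [hx]
          have hxfact : (∃ i, x = d + Pi.single i 1) ∧ x ≤ b := by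
            rw [hsuccs, List.mem_filterMap] at hxmem
            obtain ⟨i, _, hi⟩ := hxmem
            split_ifs at hi with hc
            · cases hi; exact ⟨⟨i, rfl⟩, hc⟩
          obtain ⟨⟨i, rfl⟩, hxb⟩ := hxfact
          have hdlt : tot d < tot b := by
            have := tot_mono hxb
            rw [tot_succ] at this
            omega
          have hexp : (tot b - tot d).toNat = (tot b - (tot d + 1)).toNat + 1 := by omega
          have hwts : ∀ y ∈ succs.map (wt b), y ≤ (r + 1) ^ ((tot b - (tot d + 1)).toNat) := by
            intro y hy
            rw [List.mem_map] at hy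
            obtain ⟨z, hz, rfl⟩ := hy
            rw [hsuccs, List.mem_filterMap] at hz
            obtain ⟨j, _, hj⟩ := hz
            split_ifs at hj with hc
            · cases hj
              rw [wt, tot_succ]
          have hlen : succs.length ≤ r := by
            have := List.length_filterMap_le (fun i =>
              if d + Pi.single i 1 ≤ b then some (d + Pi.single i 1) else none)
              (List.finRange r)
            rw [← hsuccs] at this
            simpa using this
          calc (succs.map (wt b)).sum
              ≤ (succs.map (wt b)).length • (r + 1) ^ ((tot b - (tot d + 1)).toNat) :=
                List.sum_le_card_nsmul _ _ hwts
            _ = succs.length * (r + 1) ^ ((tot b - (tot d + 1)).toNat) := by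
                simp [smul_eq_mul]
            _ < (r + 1) * (r + 1) ^ ((tot b - (tot d + 1)).toNat) := by
                have : 0 < (r + 1) ^ ((tot b - (tot d + 1)).toNat) := Nat.pow_pos (Nat.succ_pos r)
                exact Nat.mul_lt_mul_of_lt_of_le (by omega) (le_refl _) this
            _ = wt b d := by rw [wt, hexp, pow_succ]; ring
      simp only [mea, List.map_cons, List.sum_cons, List.map_append, List.sum_append]
      omega

lemma terminates : ∀ n : ℕ, ∀ st, Inv a b f st → mea b st ≤ n →
    ∃ N, ((frStep f b)^[N] st).2 = [] ∧ Inv a b f ((frStep f b)^[N] st) := by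
  intro n
  induction n with
  | zero =>
    intro st hst hm
    refine ⟨0, ?_, hst⟩
    rcases hKe : st.2 with _ | ⟨x, K⟩
    · simpa using hKe
    · exfalso
      have : 0 < mea b st := by
        simp only [mea, hKe, List.map_cons, List.sum_cons]
        have := wt_pos (r := r) b x
        omega
      omega
  | succ n ih =>
    intro st hst hm
    rcases hKe : st.2 with _ | ⟨x, K⟩
    · exact ⟨0, hKe, hst⟩
    · have hne : st.2 ≠ [] := by rw [hKe]; simp
      have hlt := mea_step a b f st hst hne
      obtain ⟨N, hN1, hN2⟩ := ih (frStep f b st) (inv_step a b f st hst) (by omega)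
      refine ⟨N + 1, ?_, ?_⟩
      · rwa [Function.iterate_succ_apply]
      · rwa [Function.iterate_succ_apply]

end FRAux

open FRAux in
/-- (Correctness of the `findRegion` search)  Let `r ≥ 1`, let `a ≤ b` in `ℤ^r`
(componentwise) and let `f` be a predicate on `ℤ^r` that is upward closed within the box
`[a, b]`.  Then the breadth-first search starting from the state `(A, K) = ([], [a])` terminates,
and its output `A` is exactly the set of minimal elements (for the componentwise order) of
`{ d : a ≤ d ≤ b and f d }`. -/
theorem findRegion_correct {r : ℕ} (hr : 1 ≤ r) (a b : Fin r → ℤ) (hab : a ≤ b)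
    (f : (Fin r → ℤ) → Prop)
    (hup : ∀ d d' : Fin r → ℤ, a ≤ d → d ≤ d' → d' ≤ b → f d → f d') :
    ∃ N : ℕ, ((frStep f b)^[N] ([], [a])).2 = [] ∧
      ∀ d : Fin r → ℤ, d ∈ ((frStep f b)^[N] ([], [a])).1 ↔
        Minimal (fun x => a ≤ x ∧ x ≤ b ∧ f x) d := by
  have hinit : Inv a b f ([], [a]) := by
    refine ⟨by simp, ?_, ⟨tot a, [a], [], by simp, by simp, by simp⟩, ?_⟩
    · intro d hd
      rw [List.mem_singleton] at hd
      rw [hd]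
      exact ⟨le_refl a, hab⟩
    · intro m hm
      exact Or.inr ⟨a, List.mem_singleton_self a, hm.1.1⟩
  obtain ⟨N, hN1, hA, -, -, hcov⟩ :=
    terminates a b f (mea b ([], [a])) ([], [a]) hinit (le_refl _)
  refine ⟨N, hN1, fun d => ⟨fun hd => hA d hd, fun hd => ?_⟩⟩
  rcases hcov d hd with h | ⟨d', hd', -⟩
  · exact h
  · rw [hN1] at hd'
    simp at hd'

end
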